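/- For every real a > 0 and integer n ≥ 0, lim_{s→∞} (ζ(as) - Q_n(as))^{-1/s} = p_{n+1}^a, where the limit is over real s → ∞. -/
import Mathlib

open Filter Real

noncomputable def zetaR (s : ℝ) : ℝ := ∑' m : ℕ, (m : ℝ) ^ (-s)

/-- `P k` is the (k+1)-st prime: `P 0 = 2`, `P 1 = 3`, ... -/
noncomputable def P (k : ℕ) : ℕ := Nat.nth Nat.Prime k

/-- Partial Euler product `Q n s = ∏_{k=1}^n (1 - p_k^{-s})⁻¹`. -/
noncomputable def Q (n : ℕ) (s : ℝ) : ℝ := ∏ k ∈ Finset.range n, (1 - (P k : ℝ) ^ (-s))⁻¹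

lemma P_prime (k : ℕ) : (P k).Prime := Nat.prime_nth_prime k

/-- rpow as a monoid hom on ℕ. -/
noncomputable def Frpow (t : ℝ) : ℕ →* ℝ where
  toFun m := (m : ℝ) ^ (-t)
  map_one' := by simp
  map_mul' x y := by
    push_cast
    exact Real.mul_rpow (by positivity) (by positivity)

lemma summable_Frpow {t : ℝ} (ht : 1 < t) : Summable (fun m : ℕ => (m : ℝ) ^ (-t)) :=
  Real.summable_nat_rpow.mpr (by linarith)

lemma primesBelow_P (n : ℕ) :
    (P n).primesBelow = (Finset.range n).image P := by
  ext q
  simp only [Nat.mem_primesBelow, Finset.mem_image, Finset.mem_range]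
  constructor
  · rintro ⟨hlt, hq⟩
    refine ⟨Nat.count Nat.Prime q, ?_, Nat.nth_count hq⟩
    rw [← Nat.nth_lt_nth Nat.infinite_setOf_prime, Nat.nth_count hq]
    exact hlt
  · rintro ⟨k, hk, rfl⟩
    exact ⟨(Nat.nth_lt_nth Nat.infinite_setOf_prime).mpr hk, P_prime k⟩

lemma Q_eq_tsum {t : ℝ} (ht : 1 < t) (n : ℕ) :
    Q n t = ∑' m : (Nat.smoothNumbers (P n)), (m : ℝ) ^ (-t) := by
  have hsum : Summable (Frpow t) := summable_Frpow ht
  have h := EulerProduct.prod_primesBelow_geometric_eq_tsum_smoothNumbers hsum (P n)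
  have hinj : ∀ i ∈ Finset.range n, ∀ j ∈ Finset.range n, P i = P j → i = j :=
    fun i _ j _ hij => Nat.nth_injective Nat.infinite_setOf_prime hij
  rw [primesBelow_P, Finset.prod_image hinj] at h
  simp only [Frpow, MonoidHom.coe_mk, OneHom.coe_mk] at h
  rw [Q, ← h]

lemma zetaR_sub_Q {t : ℝ} (ht : 1 < t) (n : ℕ) :
    zetaR t - Q n t = ∑' m : ((Nat.smoothNumbers (P n) : Set ℕ)ᶜ : Set ℕ), (m : ℝ) ^ (-t) := by
  have hsum : Summable (fun m : ℕ => (m : ℝ) ^ (-t)) := summable_Frpow ht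
  have h := Summable.tsum_add_tsum_compl (s := (Nat.smoothNumbers (P n) : Set ℕ))
    (hsum.subtype _) (hsum.subtype _)
  rw [zetaR, Q_eq_tsum ht]
  linarith [h]

lemma ge_P_of_not_smooth {n : ℕ} {m : ℕ} (hm : m ≠ 0)
    (h : m ∉ Nat.smoothNumbers (P n)) : P n ≤ m := by
  rw [Nat.mem_smoothNumbers] at h
  push_neg at h
  obtain ⟨q, hq, hq2⟩ := h hm
  exact le_trans hq2 (Nat.le_of_dvd (Nat.pos_of_ne_zero hm)
    (Nat.dvd_of_mem_primeFactorsList hq))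

lemma lower_bound {t : ℝ} (ht : 1 < t) (n : ℕ) :
    ((P n : ℝ)) ^ (-t) ≤ zetaR t - Q n t := by
  rw [zetaR_sub_Q ht]
  have hsum : Summable (fun m : ℕ => (m : ℝ) ^ (-t)) := summable_Frpow ht
  have hmem : (P n : ℕ) ∈ ((Nat.smoothNumbers (P n) : Set ℕ)ᶜ : Set ℕ) := by
    intro h
    exact absurd ((Nat.mem_smoothNumbers.mp h).2 (P n)
      (by simp [Nat.primeFactorsList_prime (P_prime n)])) (lt_irrefl _)
  exact Summable.le_tsum (hsum.subtype _) ⟨P n, hmem⟩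
    (fun j _ => Real.rpow_nonneg (Nat.cast_nonneg _) _)

noncomputable def Cconst (n : ℕ) : ℝ :=
  (P n : ℝ) ^ (2:ℝ) * ∑' m : ℕ, (m : ℝ) ^ (-2 : ℝ)

lemma Cconst_pos (n : ℕ) : 0 < Cconst n := by
  have h1 : (1:ℝ) ≤ ∑' m : ℕ, (m : ℝ) ^ (-2 : ℝ) := by
    have := Summable.le_tsum (summable_Frpow (by norm_num : (1:ℝ) < 2)) 1
      (fun j _ => Real.rpow_nonneg (Nat.cast_nonneg _) _)
    simpa using this
  have hp : (0:ℝ) < (P n : ℝ) := by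
    exact_mod_cast (P_prime n).pos
  have := Real.rpow_pos_of_pos hp (2:ℝ)
  unfold Cconst; exact mul_pos this (by linarith)

lemma upper_bound {t : ℝ} (ht : 2 ≤ t) (n : ℕ) :
    zetaR t - Q n t ≤ Cconst n * (P n : ℝ) ^ (-t) := by
  have ht1 : (1:ℝ) < t := by linarith
  have hp : (0:ℝ) < (P n : ℝ) := by exact_mod_cast (P_prime n).pos
  rw [zetaR_sub_Q ht1]
  have hsum2 : Summable (fun m : ℕ => (m : ℝ) ^ (-2 : ℝ)) :=
    summable_Frpow (by norm_num)
  -- termwise bound on the complement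
  have key : ∀ m : ((Nat.smoothNumbers (P n) : Set ℕ)ᶜ : Set ℕ),
      ((m : ℕ) : ℝ) ^ (-t) ≤ (P n : ℝ) ^ ((2:ℝ) - t) * ((m : ℕ) : ℝ) ^ (-2 : ℝ) := by
    rintro ⟨m, hm⟩
    rcases eq_or_ne m 0 with rfl | hm0
    · simp [Real.zero_rpow (by linarith : -t ≠ 0), Real.zero_rpow (by norm_num : (-2:ℝ) ≠ 0)]
    · have hpm : (P n : ℝ) ≤ (m : ℝ) := by
        exact_mod_cast ge_P_of_not_smooth hm0 hm
      have hm0' : (0:ℝ) < (m : ℝ) := by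
        exact_mod_cast Nat.pos_of_ne_zero hm0
      have h1 : ((m : ℕ) : ℝ) ^ (-t) = (m : ℝ) ^ ((2:ℝ) - t) * (m : ℝ) ^ (-2 : ℝ) := by
        rw [← Real.rpow_add hm0']; ring_nf
      rw [h1]
      have h2 : (m : ℝ) ^ ((2:ℝ) - t) ≤ (P n : ℝ) ^ ((2:ℝ) - t) :=
        Real.rpow_le_rpow_of_nonpos hp hpm (by linarith)
      exact mul_le_mul_of_nonneg_right h2 (Real.rpow_nonneg hm0'.le _)
  have hsub : Summable (fun m : ((Nat.smoothNumbers (P n) : Set ℕ)ᶜ : Set ℕ) =>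
      ((m : ℕ) : ℝ) ^ (-t)) := (summable_Frpow ht1).subtype _
  have hsub2 : Summable (fun m : ((Nat.smoothNumbers (P n) : Set ℕ)ᶜ : Set ℕ) =>
      (P n : ℝ) ^ ((2:ℝ) - t) * ((m : ℕ) : ℝ) ^ (-2 : ℝ)) :=
    (hsum2.subtype _).mul_left _
  calc ∑' m : ((Nat.smoothNumbers (P n) : Set ℕ)ᶜ : Set ℕ), ((m : ℕ) : ℝ) ^ (-t)
      ≤ ∑' m : ((Nat.smoothNumbers (P n) : Set ℕ)ᶜ : Set ℕ),
          (P n : ℝ) ^ ((2:ℝ) - t) * ((m : ℕ) : ℝ) ^ (-2 : ℝ) :=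
        Summable.tsum_le_tsum key hsub hsub2
    _ = (P n : ℝ) ^ ((2:ℝ) - t) *
          ∑' m : ((Nat.smoothNumbers (P n) : Set ℕ)ᶜ : Set ℕ), ((m : ℕ) : ℝ) ^ (-2 : ℝ) :=
        tsum_mul_left
    _ ≤ (P n : ℝ) ^ ((2:ℝ) - t) * ∑' m : ℕ, (m : ℝ) ^ (-2 : ℝ) := by
        refine mul_le_mul_of_nonneg_left ?_ (Real.rpow_nonneg hp.le _)
        exact Summable.tsum_subtype_le _ _ (fun m => Real.rpow_nonneg (Nat.cast_nonneg _) _) hsum2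
    _ = Cconst n * (P n : ℝ) ^ (-t) := by
        rw [Cconst, show (2:ℝ) - t = 2 + (-t) by ring, Real.rpow_add hp]
        ring

theorem golomb_difference (a : ℝ) (ha : 0 < a) (n : ℕ) :
    Tendsto (fun s : ℝ => (zetaR (a * s) - Q n (a * s)) ^ (-1 / s)) atTop
      (nhds ((P n : ℝ) ^ a)) := by
  have hp : (0:ℝ) < (P n : ℝ) := by exact_mod_cast (P_prime n).pos
  have hC : 0 < Cconst n := Cconst_pos n
  -- lower comparison function tends to p^a
  have hexp : Tendsto (fun s : ℝ => -1 / s) atTop (nhds 0) := by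
    simpa [neg_div, one_div] using (tendsto_inv_atTop_zero (𝕜 := ℝ)).neg
  have hlow : Tendsto (fun s : ℝ => (Cconst n) ^ (-1/s) * (P n : ℝ) ^ a) atTop
      (nhds ((P n : ℝ) ^ a)) := by
    have h1 : Tendsto (fun s : ℝ => (Cconst n) ^ (-1/s)) atTop (nhds 1) := by
      have := (tendsto_const_nhds (x := Cconst n) (f := atTop (α := ℝ))).rpow hexp
        (Or.inl hC.ne')
      simpa using this
    simpa using h1.mul_const ((P n : ℝ) ^ a)
  refine tendsto_of_tendsto_of_tendsto_of_le_of_le' hlow tendsto_const_nhds ?_ ?_ <;>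
    filter_upwards [eventually_ge_atTop (max (2/a) 1)] with s hs <;>
    [skip; skip] <;>
  · have hs1 : (1:ℝ) ≤ s := le_trans (le_max_right _ _) hs
    have hs0 : (0:ℝ) < s := by linarith
    have hts : 2 ≤ a * s := by
      have h2a : 2/a ≤ s := le_trans (le_max_left _ _) hs
      calc (2:ℝ) = a * (2/a) := by field_simp
        _ ≤ a * s := by nlinarith
    have ht1 : (1:ℝ) < a * s := by linarith
    have hlb := lower_bound ht1 n
    have hub := upper_bound hts n
    have hppos : (0:ℝ) < (P n : ℝ) ^ (-(a*s)) := Real.rpow_pos_of_pos hp _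
    have hDpos : 0 < zetaR (a*s) - Q n (a*s) := lt_of_lt_of_le hppos hlb
    have hz : -1/s ≤ 0 := by rw [neg_div]; exact neg_nonpos.mpr (by positivity)
    have hpa : ((P n : ℝ) ^ (-(a*s))) ^ (-1/s) = (P n : ℝ) ^ a := by
      rw [← Real.rpow_mul hp.le, show -(a*s) * (-1/s) = a by field_simp]
    first
    | calc (Cconst n) ^ (-1/s) * (P n : ℝ) ^ a
          = (Cconst n * (P n : ℝ) ^ (-(a*s))) ^ (-1/s) := by
            rw [Real.mul_rpow hC.le hppos.le, hpa]
      _ ≤ (zetaR (a*s) - Q n (a*s)) ^ (-1/s) :=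
          Real.rpow_le_rpow_of_nonpos hDpos hub hz
    | calc (zetaR (a*s) - Q n (a*s)) ^ (-1/s)
          ≤ ((P n : ℝ) ^ (-(a*s))) ^ (-1/s) :=
            Real.rpow_le_rpow_of_nonpos hppos hlb hz
      _ = (P n : ℝ) ^ a := hpa
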